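/- Let 𝔽 = {f_1,...,f_n} be a finite commutative family of surjective continuous self-maps of a compact metric space X. Then the cyclically-generated non-autonomous system (X, 𝔽) is weakly mixing if and only if the autonomous system (X, f_n ∘ f_{n-1} ∘ ... ∘ f_1) is weakly mixing. -/

import Mathlib

open Function Set

/-- Chain of maps `f` of length `j` starting at step index `s`:
`f_{(s+j-1)%n} ∘ ... ∘ f_{s%n}`. -/
def stmt6ch {X : Type*} (n : ℕ) (hn : 0 < n) (f : Fin n → X → X) (s : ℕ) :
    ℕ → X → X
  | 0 => id
  | (j+1) => f ⟨(s+j) % n, Nat.mod_lt _ hn⟩ ∘ stmt6ch n hn f s j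

namespace Stmt6

variable {X : Type*} {n : ℕ} {hn : 0 < n} {f : Fin n → X → X}

theorem ch_congr {s s' : ℕ} (h : s % n = s' % n) (j : ℕ) :
    stmt6ch n hn f s j = stmt6ch n hn f s' j := by
  induction j with
  | zero => rfl
  | succ j ih =>
    show f _ ∘ _ = f _ ∘ _
    have hx : ((s + j) % n) = ((s' + j) % n) := by rw [Nat.add_mod, h, ← Nat.add_mod]
    rw [ih]
    exact congrArg (· ∘ stmt6ch n hn f s' j) (congrArg f (Fin.mk_eq_mk.mpr hx))

theorem ch_comm_f (hcomm : ∀ i j, f i ∘ f j = f j ∘ f i) (s j : ℕ) (i : Fin n) (y : X) :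
    f i (stmt6ch n hn f s j y) = stmt6ch n hn f s j (f i y) := by
  induction j with
  | zero => rfl
  | succ j ih =>
    show f i (f _ (stmt6ch n hn f s j y)) = f _ (stmt6ch n hn f s j (f i y))
    rw [← ih]
    exact congrFun (hcomm i _) _

theorem ch_comm (hcomm : ∀ i j, f i ∘ f j = f j ∘ f i) (s j s' j' : ℕ) (y : X) :
    stmt6ch n hn f s' j' (stmt6ch n hn f s j y) = stmt6ch n hn f s j (stmt6ch n hn f s' j' y) := by
  induction j' with
  | zero => rfl
  | succ j' ih =>
    show f _ (stmt6ch n hn f s' j' (stmt6ch n hn f s j y))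
        = stmt6ch n hn f s j (f _ (stmt6ch n hn f s' j' y))
    rw [ih, ch_comm_f hcomm]

theorem ch_cont [TopologicalSpace X] (hfc : ∀ i, Continuous (f i)) (s j : ℕ) :
    Continuous (stmt6ch n hn f s j) := by
  induction j with
  | zero => exact continuous_id
  | succ j ih => exact (hfc _).comp ih

theorem ch_surj (hfs : ∀ i, Function.Surjective (f i)) (s j : ℕ) :
    Function.Surjective (stmt6ch n hn f s j) := by
  induction j with
  | zero => exact surjective_id
  | succ j ih => exact (hfs _).comp ih

end Stmt6

/-- Bootstrapping: two-pair weak mixing for a commuting family of continuous maps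
implies the analogous simultaneous-hitting property for any finite list of pairs. -/
theorem stmt6multi {X : Type*} [TopologicalSpace X] (ω : ℕ → X → X)
    (hcont : ∀ k, Continuous (ω k))
    (hcm : ∀ k t y, ω k (ω t y) = ω t (ω k y))
    (H2 : ∀ U₁ U₂ V₁ V₂ : Set X, IsOpen U₁ → IsOpen U₂ → IsOpen V₁ → IsOpen V₂ →
      U₁.Nonempty → U₂.Nonempty → V₁.Nonempty → V₂.Nonempty →
      ∃ k : ℕ, 1 ≤ k ∧ (ω k '' U₁ ∩ V₁).Nonempty ∧ (ω k '' U₂ ∩ V₂).Nonempty) :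
    ∀ (N : ℕ) (L : List (Set X × Set X)), L.length ≤ N →
      (∀ p ∈ L, IsOpen p.1 ∧ p.1.Nonempty ∧ IsOpen p.2 ∧ p.2.Nonempty) →
      ∃ k : ℕ, 1 ≤ k ∧ ∀ p ∈ L, ((ω k '' p.1) ∩ p.2).Nonempty := by
  intro N
  induction N with
  | zero =>
    intro L hL _
    cases L with
    | nil => exact ⟨1, le_refl _, by simp⟩
    | cons a L => simp at hL
  | succ N ih =>
    intro L hL hcond
    match L with
    | [] => exact ⟨1, le_refl _, by simp⟩
    | [p] =>
      obtain ⟨h1, h2, h3, h4⟩ := hcond p (by simp)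
      obtain ⟨k, hk, hne, -⟩ := H2 p.1 p.1 p.2 p.2 h1 h1 h3 h3 h2 h2 h4 h4
      exact ⟨k, hk, by simpa using hne⟩
    | p :: q :: L' =>
      obtain ⟨hpo1, hpn1, hpo2, hpn2⟩ := hcond p (by simp)
      obtain ⟨hqo1, hqn1, hqo2, hqn2⟩ := hcond q (by simp)
      obtain ⟨k₀, hk₀, ⟨y₁, ⟨x₁, hx₁, hyx₁⟩, hy₁⟩, ⟨y₂, ⟨x₂, hx₂, hyx₂⟩, hy₂⟩⟩ :=
        H2 p.1 p.2 q.1 q.2 hpo1 hpo2 hqo1 hqo2 hpn1 hpn2 hqn1 hqn2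
      set A : Set X := p.1 ∩ (ω k₀) ⁻¹' q.1 with hA
      set B : Set X := p.2 ∩ (ω k₀) ⁻¹' q.2 with hB
      have hAopen : IsOpen A := hpo1.inter (hqo1.preimage (hcont k₀))
      have hBopen : IsOpen B := hpo2.inter (hqo2.preimage (hcont k₀))
      have hAne : A.Nonempty := ⟨x₁, hx₁, by simp [mem_preimage, hyx₁, hy₁]⟩
      have hBne : B.Nonempty := ⟨x₂, hx₂, by simp [mem_preimage, hyx₂, hy₂]⟩
      obtain ⟨t, ht, hits⟩ := ih ((A, B) :: L')
        (by simp at hL ⊢; omega)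
        (by
          intro r hr
          rcases List.mem_cons.mp hr with h | h
          · subst h; exact ⟨hAopen, hAne, hBopen, hBne⟩
          · exact hcond r (by simp [h]))
      refine ⟨t, ht, ?_⟩
      intro r hr
      rcases List.mem_cons.mp hr with h | hr'
      · -- r = p
        obtain ⟨y, ⟨x, hxA, rfl⟩, hyB⟩ := hits (A, B) (by simp)
        subst h
        exact ⟨ω t x, ⟨x, hxA.1, rfl⟩, hyB.1⟩
      rcases List.mem_cons.mp hr' with h | hr''
      · -- r = q
        obtain ⟨y, ⟨x, hxA, rfl⟩, hyB⟩ := hits (A, B) (by simp)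
        subst h
        refine ⟨ω t (ω k₀ x), ⟨ω k₀ x, hxA.2, rfl⟩, ?_⟩
        rw [← hcm k₀ t x]
        exact hyB.2
      · exact hits r (by simp [hr''])

/-- For a finite commutative family of surjective continuous self-maps
of a compact metric space, the cyclically-generated non-autonomous system is weakly
mixing iff the composed autonomous system `(X, f_n ∘ ... ∘ f_1)` is weakly mixing. -/
theorem stmt6 {X : Type*} [MetricSpace X] [CompactSpace X]
    (n : ℕ) (hn : 0 < n) (f : Fin n → X → X)
    (hfc : ∀ i, Continuous (f i)) (hfs : ∀ i, Function.Surjective (f i))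
    (hcomm : ∀ i j, f i ∘ f j = f j ∘ f i)
    (ω : ℕ → X → X) (hω0 : ω 0 = id)
    (hω : ∀ k, ω (k + 1) = f ⟨k % n, Nat.mod_lt k hn⟩ ∘ ω k)
    (g : X → X) (hg : g = ω n) :
    (∀ U₁ U₂ V₁ V₂ : Set X, IsOpen U₁ → IsOpen U₂ → IsOpen V₁ → IsOpen V₂ →
      U₁.Nonempty → U₂.Nonempty → V₁.Nonempty → V₂.Nonempty →
      ∃ k : ℕ, 1 ≤ k ∧ (ω k '' U₁ ∩ V₁).Nonempty ∧ (ω k '' U₂ ∩ V₂).Nonempty) ↔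
    (∀ U₁ U₂ V₁ V₂ : Set X, IsOpen U₁ → IsOpen U₂ → IsOpen V₁ → IsOpen V₂ →
      U₁.Nonempty → U₂.Nonempty → V₁.Nonempty → V₂.Nonempty →
      ∃ m : ℕ, 1 ≤ m ∧ (g^[m] '' U₁ ∩ V₁).Nonempty ∧ (g^[m] '' U₂ ∩ V₂).Nonempty) := by
  -- identify ω with explicit chains
  have homega : ∀ k, ω k = stmt6ch n hn f 0 k := by
    intro k
    induction k with
    | zero => exact hω0
    | succ k ih =>
      rw [hω k, ih]
      exact congrArg (· ∘ stmt6ch n hn f 0 k)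
        (congrArg f (Fin.mk_eq_mk.mpr (by rw [Nat.zero_add])))
  have homega_add : ∀ k j y, ω (k + j) y = stmt6ch n hn f k j (ω k y) := by
    intro k j
    induction j with
    | zero => intro y; rfl
    | succ j ih =>
      intro y
      have h1 : ω (k + (j+1)) y = f ⟨(k+j) % n, Nat.mod_lt _ hn⟩ (ω (k+j) y) := by
        have : k + (j+1) = (k+j) + 1 := by omega
        rw [this, hω (k+j)]; rfl
      rw [h1, ih y]
      rfl
  have homul : ∀ m, ω (m * n) = g^[m] := by
    intro m
    induction m with
    | zero => simpa using hω0
    | succ m ih =>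
      funext y
      have h1 : (m+1) * n = m * n + n := by ring
      have h2 : ω (m * n + n) y = stmt6ch n hn f (m*n) n (ω (m*n) y) := homega_add _ _ _
      have h3 : stmt6ch n hn f (m*n) n = stmt6ch n hn f 0 n :=
        Stmt6.ch_congr (by simp [Nat.mul_mod_left]) n
      rw [h1, h2, h3, ← homega n, ← hg, ih, Function.iterate_succ_apply']
  have hcontω : ∀ k, Continuous (ω k) := by
    intro k; rw [homega k]; exact Stmt6.ch_cont hfc 0 k
  have hcmω : ∀ k t y, ω k (ω t y) = ω t (ω k y) := by
    intro k t y
    simp only [homega]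
    exact Stmt6.ch_comm hcomm 0 t 0 k y
  constructor
  · -- non-autonomous weak mixing → autonomous weak mixing
    intro H2 U₁ U₂ V₁ V₂ hU₁o hU₂o hV₁o hV₂o hU₁n hU₂n hV₁n hV₂n
    set Q : ℕ → X → X := fun ρ => stmt6ch n hn f ρ (n - ρ) with hQ
    have hQc : ∀ ρ, Continuous (Q ρ) := fun ρ => Stmt6.ch_cont hfc ρ (n - ρ)
    have hQs : ∀ ρ, Function.Surjective (Q ρ) := fun ρ => Stmt6.ch_surj hfs ρ (n - ρ)
    set L : List (Set X × Set X) :=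
      (List.range n).flatMap (fun ρ => [(U₁, Q ρ ⁻¹' V₁), (U₂, Q ρ ⁻¹' V₂)]) with hL
    have hcond : ∀ p ∈ L, IsOpen p.1 ∧ p.1.Nonempty ∧ IsOpen p.2 ∧ p.2.Nonempty := by
      intro p hp
      rw [hL, List.mem_flatMap] at hp
      obtain ⟨ρ, -, hmem⟩ := hp
      have hne : ∀ (V : Set X), V.Nonempty → (Q ρ ⁻¹' V).Nonempty := by
        intro V ⟨v, hv⟩
        obtain ⟨w, hw⟩ := hQs ρ v
        exact ⟨w, by simp [mem_preimage, hw, hv]⟩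
      rcases List.mem_cons.mp hmem with h | h
      · subst h
        exact ⟨hU₁o, hU₁n, hV₁o.preimage (hQc ρ), hne V₁ hV₁n⟩
      · have : p = (U₂, Q ρ ⁻¹' V₂) := by simpa using h
        subst this
        exact ⟨hU₂o, hU₂n, hV₂o.preimage (hQc ρ), hne V₂ hV₂n⟩
    obtain ⟨k, hk1, hits⟩ := stmt6multi ω hcontω hcmω H2 L.length L (le_refl _) hcond
    set σ := k % n with hσdef
    have hσ : σ < n := Nat.mod_lt _ hn
    have hmem₁ : (U₁, Q σ ⁻¹' V₁) ∈ L := by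
      rw [hL, List.mem_flatMap]
      exact ⟨σ, List.mem_range.mpr hσ, by simp⟩
    have hmem₂ : (U₂, Q σ ⁻¹' V₂) ∈ L := by
      rw [hL, List.mem_flatMap]
      exact ⟨σ, List.mem_range.mpr hσ, by simp⟩
    obtain ⟨y₁, ⟨x₁, hx₁, hyx₁⟩, hy₁⟩ := hits _ hmem₁
    obtain ⟨y₂, ⟨x₂, hx₂, hyx₂⟩, hy₂⟩ := hits _ hmem₂
    -- extend time k by n - σ to reach a multiple of n
    have hT : ∀ y, ω (k + (n - σ)) y = Q σ (ω k y) := by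
      intro y
      rw [homega_add k (n - σ) y]
      have : stmt6ch n hn f k (n - σ) = stmt6ch n hn f σ (n - σ) :=
        Stmt6.ch_congr (by rw [hσdef, Nat.mod_mod_of_dvd k (dvd_refl n)]) (n - σ)
      rw [this]
    have hkey : ∀ a r : ℕ, a + r = k → r < n → k + (n - r) = a + n := by
      intro a r h hr; omega
    have hmul : k + (n - σ) = (k / n + 1) * n := by
      have h1 : n * (k / n) + k % n = k := Nat.div_add_mod k n
      have h2 : (k / n + 1) * n = n * (k / n) + n := by ring
      rw [h2]
      exact hkey (n * (k / n)) σ h1 hσ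
    have hωT : ω (k + (n - σ)) = g^[k / n + 1] := by
      rw [hmul]; exact homul _
    refine ⟨k / n + 1, Nat.le_add_left 1 _, ?_, ?_⟩
    · refine ⟨g^[k / n + 1] x₁, ⟨x₁, hx₁, rfl⟩, ?_⟩
      have := hT x₁
      rw [hωT] at this
      rw [this, hyx₁]
      exact hy₁
    · refine ⟨g^[k / n + 1] x₂, ⟨x₂, hx₂, rfl⟩, ?_⟩
      have := hT x₂
      rw [hωT] at this
      rw [this, hyx₂]
      exact hy₂
  · -- autonomous weak mixing → non-autonomous weak mixing
    intro H U₁ U₂ V₁ V₂ hU₁o hU₂o hV₁o hV₂o hU₁n hU₂n hV₁n hV₂n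
    obtain ⟨m, hm, h1, h2⟩ := H U₁ U₂ V₁ V₂ hU₁o hU₂o hV₁o hV₂o hU₁n hU₂n hV₁n hV₂n
    refine ⟨m * n, ?_, ?_, ?_⟩
    · have : 0 < m * n := Nat.mul_pos hm hn
      omega
    · rw [homul m]; exact h1
    · rw [homul m]; exact h2
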